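/- Let H_n denote the monic (probabilists') Hermite polynomials, satisfying H_{n+1}(x) = x H_n(x) - n H_{n-1}(x) with H₀ = 1, H₁(x) = x. Let u be a pure unit quaternion (u² = -1) and s > 0 real, and set x = u s. Then the orthogonal polynomials P_n defined by P₀ = 1, P₁(z) = z, P_{n+1}(z) = z P_n(z) + β_n P_{n-1}(z) (β_n = n+2 for odd n, n for even n) satisfy: P_n(x) = (uⁿ/s) H_{n+1}(s) if n is even, and P_n(x) = (uⁿ/s²)(s H_{n+1}(s) + H_n(s)) if n is odd. -/

import Mathlib

open Polynomial Quaternion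

noncomputable def β (n : ℕ) : ℝ := if Odd n then n + 2 else n

noncomputable def P : ℕ → Polynomial ℝ
  | 0 => 1
  | 1 => X
  | (n + 2) => X * P (n + 1) + C (β (n + 1)) * P n

/-- Evaluation of the monic probabilists' Hermite polynomial at a real point. -/
noncomputable def H (n : ℕ) (s : ℝ) : ℝ := ((hermite n).map (Int.castRingHom ℝ)).eval s

lemma deriv_hermite : ∀ n : ℕ, derivative (hermite (n + 1)) = ((n : ℤ[X]) + 1) * hermite n := by
  intro n
  induction n using Nat.twoStepInduction with
  | zero => simp [hermite_one]
  | one => simp [hermite_succ 1, hermite_one]; ring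
  | more n ih1 ih2 =>
    rw [hermite_succ (n + 2), derivative_sub, derivative_mul, derivative_X, one_mul, ih2,
      derivative_mul, ih1]
    have h2 : hermite (n + 2) = X * hermite (n + 1) - ((n : ℤ[X]) + 1) * hermite n := by
      rw [hermite_succ (n + 1), ih1]
    rw [h2]
    push_cast
    simp only [derivative_add, derivative_natCast, derivative_one]
    ring

lemma hermite_rec (n : ℕ) :
    hermite (n + 2) = X * hermite (n + 1) - ((n : ℤ[X]) + 1) * hermite n := by
  rw [hermite_succ (n + 1), deriv_hermite]

lemma H_rec (n : ℕ) (s : ℝ) : H (n + 2) s = s * H (n + 1) s - (n + 1) * H n s := by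
  unfold H
  rw [hermite_rec n]
  simp only [Polynomial.map_sub, Polynomial.map_mul, Polynomial.map_add,
    Polynomial.map_natCast, Polynomial.map_one, Polynomial.map_X,
    eval_sub, eval_mul, eval_add, eval_natCast, eval_one, eval_X]

lemma H_one (s : ℝ) : H 1 s = s := by simp [H, hermite_one]
lemma H_two (s : ℝ) : H 2 s = s ^ 2 - 1 := by
  simp [H, hermite_succ 1, hermite_one]; ring

theorem stmt8 (u : ℍ[ℝ]) (hu : u ^ 2 = -1) (s : ℝ) (hs : 0 < s) (n : ℕ) :
    (Even n → aeval (s • u) (P n) = (H (n + 1) s / s) • u ^ n) ∧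
    (Odd n → aeval (s • u) (P n) = ((s * H (n + 1) s + H n s) / s ^ 2) • u ^ n) := by
  have hs' : s ≠ 0 := hs.ne'
  have hupow : ∀ k : ℕ, u ^ (k + 2) = -u ^ k := by
    intro k; rw [pow_add, hu, mul_neg, mul_one]
  induction n using Nat.twoStepInduction with
  | zero =>
    constructor
    · intro _; simp [P, H_one, div_self hs']
    · intro h; exact absurd h (by decide)
  | one =>
    constructor
    · intro h; exact absurd h (by decide)
    · intro _
      simp only [P, aeval_X, pow_one]
      rw [show H (1 + 1) s = s ^ 2 - 1 from H_two s, H_one,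
        show ((s * (s ^ 2 - 1) + s) / s ^ 2) = s by field_simp; ring]
  | more n ih1 ih2 =>
    have key : aeval (s • u) (P (n + 2)) =
        (s • u) * aeval (s • u) (P (n + 1)) + β (n + 1) • aeval (s • u) (P n) := by
      simp [P, Algebra.smul_def]
    have hmul : ∀ (c : ℝ) (k : ℕ), (s • u) * (c • u ^ k) = (s * c) • u ^ (k + 1) := by
      intro c k
      rw [smul_mul_smul_comm, ← pow_succ']
    have hrw : ∀ (c : ℝ), c • u ^ n = (-c) • u ^ (n + 2) := by
      intro c; rw [hupow, smul_neg, neg_smul, neg_neg]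
    rcases Nat.even_or_odd n with he | ho
    · have h1 := ih1.1 he
      have h2 := ih2.2 he.add_one
      have hβ : β (n + 1) = n + 3 := by
        simp [β, he.add_one]; ring
      constructor
      · intro _
        rw [key, h1, h2, hβ, hmul, smul_smul, hrw, ← add_smul]
        congr 1
        rw [H_rec (n + 1) s]
        field_simp
        push_cast
        ring
      · intro h
        exact absurd (he.add_one.add_one) (Nat.not_even_iff_odd.mpr h)
    · have h1 := ih1.2 ho
      have h2 := ih2.1 ho.add_one
      have hβ : β (n + 1) = n + 1 := by
        simp [β, Nat.not_odd_iff_even.mpr ho.add_one]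
      constructor
      · intro h
        exact absurd (ho.add_one.add_one) (Nat.not_odd_iff_even.mpr h)
      · intro _
        rw [key, h1, h2, hβ, hmul, smul_smul, hrw, ← add_smul]
        congr 1
        rw [H_rec (n + 1) s, H_rec n s]
        field_simp
        push_cast
        ring
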